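/- For every n ≥ 2, the real zero set of the generalized Motzkin polynomial is exactly the set of sign vectors: {x ∈ ℝⁿ : M_n(x) = 0} = {−1,1}ⁿ. -/

import Mathlib

open MvPolynomial Finset

noncomputable section

/-- The all-ones exponent vector `e = (1,…,1)`. -/
def eAll (n : ℕ) : Fin n →₀ ℕ := Finsupp.equivFunOnFinite.symm (fun _ => 1)

/-- The exponent vector `2(e + e_j)`. -/
def expMotz (n : ℕ) (j : Fin n) : Fin n →₀ ℕ :=
  Finsupp.equivFunOnFinite.symm (fun i => if i = j then 4 else 2)

/-- The exponent vector `2e = (2,…,2)`. -/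
def twoE (n : ℕ) : Fin n →₀ ℕ := Finsupp.equivFunOnFinite.symm (fun _ => 2)

/-- The generalized Motzkin polynomial
`M_n = 1 + Σ_{j=1}^n x^{2(e+e_j)} − (n+1)·x^{2e}`. -/
def Motzkin (n : ℕ) : MvPolynomial (Fin n) ℝ :=
  1 + (∑ j : Fin n, monomial (expMotz n j) (1 : ℝ)) - monomial (twoE n) ((n : ℝ) + 1)

/-- The signed quadric `N_n = (1 − Σ_{j=1}^n x_j)²`. -/
def SignedQuadric (n : ℕ) : MvPolynomial (Fin n) ℝ :=
  (1 - ∑ j : Fin n, X j) ^ 2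

/-- `f` is a circuit polynomial. -/
def IsCircuit {n : ℕ} (f : MvPolynomial (Fin n) ℝ) : Prop :=
  (∃ (w : Fin n →₀ ℕ) (c : ℝ), 0 ≤ c ∧ f = monomial (2 • w) c) ∨
  (∃ r : ℕ, r ≤ n ∧ ∃ (α : Fin (r + 1) → (Fin n →₀ ℕ)) (c : Fin (r + 1) → ℝ)
      (β : Fin n →₀ ℕ) (fβ : ℝ) (lam : Fin (r + 1) → ℝ),
    (∀ j, 0 < c j) ∧
    (∀ j i, Even (α j i)) ∧
    AffineIndependent ℝ (fun j => (fun i => (α j i : ℝ))) ∧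
    (∀ j, 0 < lam j) ∧ (∑ j, lam j) = 1 ∧
    (∀ i, (β i : ℝ) = ∑ j, lam j * (α j i : ℝ)) ∧
    f = monomial β fβ + ∑ j, monomial (α j) (c j))

/-- `f` is a nonnegative circuit polynomial. -/
def IsNonnegCircuit {n : ℕ} (f : MvPolynomial (Fin n) ℝ) : Prop :=
  IsCircuit f ∧ ∀ x : Fin n → ℝ, 0 ≤ eval x f

/-- The set of sums of nonnegative circuit polynomials. -/
def SONCset (n : ℕ) : Set (MvPolynomial (Fin n) ℝ) :=
  {f | ∃ (k : ℕ) (μ : Fin k → ℝ) (p : Fin k → MvPolynomial (Fin n) ℝ),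
    (∀ i, 0 ≤ μ i) ∧ (∀ i, IsNonnegCircuit (p i)) ∧ f = ∑ i, μ i • p i}

/-- The set of sums of squares. -/
def SOSset (n : ℕ) : Set (MvPolynomial (Fin n) ℝ) :=
  {f | ∃ (k : ℕ) (p : Fin k → MvPolynomial (Fin n) ℝ), f = ∑ i, (p i) ^ 2}

/-- The set of sums of squares of binomials (SDSOS). -/
def SDSOSset (n : ℕ) : Set (MvPolynomial (Fin n) ℝ) :=
  {f | ∃ (k : ℕ) (a b : Fin k → ℝ) (u v : Fin k → (Fin n →₀ ℕ)),
    f = ∑ i, (monomial (u i) (a i) + monomial (v i) (b i)) ^ 2}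

/-- The Sherali-Adams set: nonnegative combinations of `x_I · x̄_J`. -/
def SAset (n : ℕ) : Set (MvPolynomial (Fin n) ℝ) :=
  {f | ∃ α : Finset (Fin n) × Finset (Fin n) → ℝ, (∀ p, 0 ≤ α p) ∧
    f = ∑ p : Finset (Fin n) × Finset (Fin n),
      α p • ((∏ i ∈ p.1, X i) * ∏ j ∈ p.2, (1 - X j))}

/-- The preprime generated by a finite constraint set. -/
def preprime {n : ℕ} (G : Finset (MvPolynomial (Fin n) ℝ)) :
    Set (MvPolynomial (Fin n) ℝ) :=
  {p | ∃ (k : ℕ) (cc : Fin k → ℝ) (e : Fin k → MvPolynomial (Fin n) ℝ → ℕ),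
    (∀ i, 0 ≤ cc i) ∧ p = ∑ i, cc i • ∏ g ∈ G, g ^ (e i g)}

/-- The feasibility set `𝒢₊` of a constraint set. -/
def feasSet {n : ℕ} (G : Finset (MvPolynomial (Fin n) ℝ)) : Set (Fin n → ℝ) :=
  {x | ∀ g ∈ G, 0 ≤ eval x g}

/-- The Boolean hypercube `{0,1}ⁿ ⊆ ℝⁿ`. -/
def Hypercube (n : ℕ) : Set (Fin n → ℝ) := {x | ∀ i, x i = 0 ∨ x i = 1}

/-- The degree-`D` Putinar-type hierarchy `H(GEN, 𝒢, D)`. -/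
def HPut {n : ℕ} (GEN : Set (MvPolynomial (Fin n) ℝ))
    (G : Finset (MvPolynomial (Fin n) ℝ)) (D : ℕ) : Set (MvPolynomial (Fin n) ℝ) :=
  {f | ∃ (k : ℕ) (s g : Fin k → MvPolynomial (Fin n) ℝ),
    (∀ i, s i ∈ GEN) ∧ (∀ i, g i ∈ G) ∧
    (∀ i, (s i * g i).totalDegree ≤ D) ∧ f = ∑ i, s i * g i}

/-- The degree-`D` Schmüdgen-type hierarchy `H*(GEN, 𝒢, D)`. -/
def HSch {n : ℕ} (GEN : Set (MvPolynomial (Fin n) ℝ))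
    (G : Finset (MvPolynomial (Fin n) ℝ)) (D : ℕ) : Set (MvPolynomial (Fin n) ℝ) :=
  {f | ∃ (k : ℕ) (s g : Fin k → MvPolynomial (Fin n) ℝ),
    (∀ i, s i ∈ GEN) ∧ (∀ i, g i ∈ preprime G) ∧
    (∀ i, (s i * g i).totalDegree ≤ D) ∧ f = ∑ i, s i * g i}

/-- `bound(f, GEN, 𝒢, D)` for the Putinar-type hierarchy, valued in `EReal`. -/
def boundPut {n : ℕ} (f : MvPolynomial (Fin n) ℝ) (GEN : Set (MvPolynomial (Fin n) ℝ))
    (G : Finset (MvPolynomial (Fin n) ℝ)) (D : ℕ) : EReal :=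
  sSup {x : EReal | ∃ lam : ℝ, x = (lam : EReal) ∧ f - C lam ∈ HPut GEN G D}

/-- `boundSch(f, GEN, 𝒢, D)` for the Schmüdgen-type hierarchy, valued in `EReal`. -/
def boundSch {n : ℕ} (f : MvPolynomial (Fin n) ℝ) (GEN : Set (MvPolynomial (Fin n) ℝ))
    (G : Finset (MvPolynomial (Fin n) ℝ)) (D : ℕ) : EReal :=
  sSup {x : EReal | ∃ lam : ℝ, x = (lam : EReal) ∧ f - C lam ∈ HSch GEN G D}

/-- Putinar-type Sherali-Adams hierarchy with the SA degree convention
`deg p_i ≤ ⌊(D − deg g_i)/2⌋`, encoded as `2·deg p_i + deg g_i ≤ D`. -/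
def HPutSA {n : ℕ} (G : Finset (MvPolynomial (Fin n) ℝ)) (D : ℕ) :
    Set (MvPolynomial (Fin n) ℝ) :=
  {f | ∃ (k : ℕ) (p g : Fin k → MvPolynomial (Fin n) ℝ),
    (∀ i, p i ∈ SAset n) ∧ (∀ i, g i ∈ G) ∧
    (∀ i, 2 * (p i).totalDegree + (g i).totalDegree ≤ D) ∧ f = ∑ i, p i * g i}

/-- Schmüdgen-type Sherali-Adams hierarchy with the SA degree convention. -/
def HSchSA {n : ℕ} (G : Finset (MvPolynomial (Fin n) ℝ)) (D : ℕ) :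
    Set (MvPolynomial (Fin n) ℝ) :=
  {f | ∃ (k : ℕ) (p g : Fin k → MvPolynomial (Fin n) ℝ),
    (∀ i, p i ∈ SAset n) ∧ (∀ i, g i ∈ preprime G) ∧
    (∀ i, 2 * (p i).totalDegree + (g i).totalDegree ≤ D) ∧ f = ∑ i, p i * g i}

/-- `bound(f, 𝕊𝔸, 𝒢, D)`. -/
def boundPutSA {n : ℕ} (f : MvPolynomial (Fin n) ℝ)
    (G : Finset (MvPolynomial (Fin n) ℝ)) (D : ℕ) : EReal :=
  sSup {x : EReal | ∃ lam : ℝ, x = (lam : EReal) ∧ f - C lam ∈ HPutSA G D}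

/-- `boundSch(f, 𝕊𝔸, 𝒢, D)`. -/
def boundSchSA {n : ℕ} (f : MvPolynomial (Fin n) ℝ)
    (G : Finset (MvPolynomial (Fin n) ℝ)) (D : ℕ) : EReal :=
  sSup {x : EReal | ∃ lam : ℝ, x = (lam : EReal) ∧ f - C lam ∈ HSchSA G D}

end

/-- AM-GM equality case via strict Jensen. -/
lemma amgm_eq_aux {m : ℕ} (hm : 0 < m) (t : Fin m → ℝ) (ht : ∀ j, 0 < t j) (P : ℝ)
    (hP : 0 < P) (hsum : ∑ j, t j = m * P) (hprod : ∏ j, t j = P ^ m) :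
    ∀ j, t j = P := by
  have hm' : (0:ℝ) < m := Nat.cast_pos.mpr hm
  set a : Fin m → ℝ := fun j => Real.log (t j) with ha
  have hsum_a : ∑ j, a j = m * Real.log P := by
    rw [ha, ← Real.log_prod (fun j _ => (ht j).ne'), hprod, Real.log_pow]
  have key : ∀ ⦃j⦄, j ∈ (univ : Finset (Fin m)) → ∀ ⦃k⦄, k ∈ (univ : Finset (Fin m)) →
      a j = a k := by
    apply strictConvexOn_exp.eq_of_le_map_sum (w := fun _ => (1:ℝ)/m)
    · intro i _; positivity
    · simp [Finset.sum_const, Finset.card_univ]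
      field_simp
    · intro i _; trivial
    · have h1 : ∑ i : Fin m, ((1:ℝ)/m) • Real.exp (a i) = P := by
        simp only [smul_eq_mul, ha, Real.exp_log (ht _)]
        rw [← Finset.mul_sum, hsum]; field_simp
      have h2 : Real.exp (∑ i : Fin m, ((1:ℝ)/m) • a i) = P := by
        simp only [smul_eq_mul]
        rw [← Finset.mul_sum, hsum_a,
          show (1:ℝ)/m * (m * Real.log P) = Real.log P by field_simp]
        exact Real.exp_log hP
      rw [h1, h2]
  intro j
  have hall : ∀ k, t k = t j := fun k =>
    Real.log_injOn_pos (Set.mem_Ioi.mpr (ht k)) (Set.mem_Ioi.mpr (ht j))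
      (key (Finset.mem_univ k) (Finset.mem_univ j))
  have hs : ∑ k : Fin m, t k = m * t j := by
    simp [hall, Finset.sum_const, Finset.card_univ, mul_comm]
  rw [hsum] at hs
  exact mul_left_cancel₀ hm'.ne' hs.symm

lemma eval_Motzkin_eq (n : ℕ) (x : Fin n → ℝ) :
    MvPolynomial.eval x (Motzkin n)
      = 1 + (∏ i, x i ^ 2) * (∑ j, x j ^ 2) - ((n : ℝ) + 1) * ∏ i, x i ^ 2 := by
  have hmon : ∀ j : Fin n,
      MvPolynomial.eval x (monomial (expMotz n j) (1 : ℝ))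
        = (∏ i, x i ^ 2) * x j ^ 2 := by
    intro j
    rw [eval_monomial, one_mul,
      Finsupp.prod_fintype _ _ (fun i => pow_zero (x i))]
    have : ∀ i : Fin n, x i ^ (expMotz n j i)
        = x i ^ 2 * (if i = j then x i ^ 2 else 1) := by
      intro i
      simp only [expMotz, Finsupp.coe_equivFunOnFinite_symm]
      by_cases h : i = j <;> simp [h, pow_succ, pow_zero] <;> ring
    rw [Finset.prod_congr rfl (fun i _ => this i), Finset.prod_mul_distrib,
      Finset.prod_ite_eq' univ j (fun i => x i ^ 2)]
    simp
  have htwoE : MvPolynomial.eval x (monomial (twoE n) ((n : ℝ) + 1))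
      = ((n : ℝ) + 1) * ∏ i, x i ^ 2 := by
    rw [eval_monomial, Finsupp.prod_fintype _ _ (fun i => pow_zero (x i))]
    simp [twoE, Finsupp.coe_equivFunOnFinite_symm]
  rw [Motzkin, map_sub, map_add, map_one, map_sum, htwoE]
  simp only [hmon, ← Finset.mul_sum]

/-- For every `n ≥ 2`, the real zero set of the generalized Motzkin
polynomial is exactly `{−1,1}ⁿ`. -/
theorem motzkin_zero_set (n : ℕ) (hn : 2 ≤ n) :
    {x : Fin n → ℝ | MvPolynomial.eval x (Motzkin n) = 0}
      = {x : Fin n → ℝ | ∀ i, x i = -1 ∨ x i = 1} := by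
  ext x
  simp only [Set.mem_setOf_eq, eval_Motzkin_eq]
  set y : Fin n → ℝ := fun i => x i ^ 2 with hy
  set P : ℝ := ∏ i, y i with hPdef
  constructor
  · intro h
    by_cases hz : ∃ i, x i = 0
    · exfalso
      obtain ⟨i, hi⟩ := hz
      have hP0 : P = 0 := by
        rw [hPdef]; exact Finset.prod_eq_zero (Finset.mem_univ i) (by simp [hy, hi])
      rw [hP0] at h; simp at h
    · push_neg at hz
      have hypos : ∀ i, 0 < y i := by
        intro i
        have h0 : x i ≠ 0 := hz i
        simp only [hy]
        positivity
      have hPpos : 0 < P := Finset.prod_pos (fun i _ => hypos i)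
      set t : Fin (n + 1) → ℝ := Fin.cons 1 (fun j => P * y j) with htdef
      have htpos : ∀ j, 0 < t j := by
        intro j
        refine Fin.cases ?_ ?_ j <;> simp [htdef]
        intro k; exact mul_pos hPpos (hypos k)
      have hsum : ∑ j, t j = (n + 1 : ℕ) * P := by
        rw [htdef, Fin.sum_cons, ← Finset.mul_sum]
        push_cast
        linarith [h]
      have hprod : ∏ j, t j = P ^ (n + 1) := by
        rw [htdef, Fin.prod_cons, one_mul, Finset.prod_mul_distrib,
          Finset.prod_const, Finset.card_univ, Fintype.card_fin, ← hPdef]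
        ring
      have hall := amgm_eq_aux (Nat.succ_pos n) t htpos P hPpos hsum hprod
      have hP1 : P = 1 := by
        have := hall 0
        simpa [htdef] using this.symm
      intro i
      have hyi : y i = 1 := by
        have := hall i.succ
        rw [htdef] at this
        simp only [Fin.cons_succ] at this
        rw [hP1, one_mul] at this; exact this
      have : (x i - 1) * (x i + 1) = 0 := by
        have : x i ^ 2 = 1 := hyi
        nlinarith
      rcases mul_eq_zero.mp this with h1 | h1
      · right; linarith
      · left; linarith
  · intro h
    have hy1 : ∀ i, y i = 1 := by
      intro i
      rcases h i with h1 | h1 <;> simp [hy, h1]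
    have hP1 : P = 1 := by simp [hPdef, hy1]
    rw [← hPdef] at *
    rw [show (∑ j, x j ^ 2) = ∑ j, y j from rfl]
    simp [hy1, hP1, Finset.sum_const, Finset.card_univ]
    ring
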